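/- (Lemma 3(ii), discrete time.) Assume X_F is absorbing (f(x,a) ∈ X_F whenever x ∈ X_F) and nonempty, r(x,a) = 0 whenever x ∈ X_F, and the bounded time-to-failure assumption holds with bound T_f. Then for every p ≥ 0 and every x ∈ X_U, V_p(x) ≤ R_{X_U} · (1 − γ^{T_f+1}) / (1 − γ) − p · γ^{T_f}, where R_{X_U} = sSup {r(x,a) | x ∈ X_U, a ∈ U}. -/

import Mathlib

open Set

noncomputable section

/-- Trajectory of the discrete-time system `x_{t+1} = f(x_t, u(x_t))` starting at `x`. -/
def traj {X U : Type*} (f : X → U → X) (u : X → U) (x : X) : ℕ → X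
  | 0 => x
  | t + 1 => f (traj f u x t) (u (traj f u x t))

/-- The controller `u` is safe for the state `x`: the trajectory never enters the failure set. -/
def SafeFor {X U : Type*} (f : X → U → X) (XF : Set X) (u : X → U) (x : X) : Prop :=
  ∀ t : ℕ, traj f u x t ∉ XF

/-- The viability kernel: states from which some controller avoids failure forever. -/
def viab {X U : Type*} (f : X → U → X) (XF : Set X) : Set X :=
  {x | ∃ u : X → U, SafeFor f XF u x}

/-- Discounted return `G(x,u)`. -/
def ret {X U : Type*} (γ : ℝ) (f : X → U → X) (r : X → U → ℝ) (x : X) (u : X → U) : ℝ :=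
  ∑' t : ℕ, γ ^ t * r (traj f u x t) (u (traj f u x t))

/-- Discounted risk `ρ(x,u)`. -/
def risk {X U : Type*} (γ : ℝ) (f : X → U → X) (XF : Set X) (x : X) (u : X → U) : ℝ :=
  ∑' t : ℕ, γ ^ t * XF.indicator (fun _ => (1 : ℝ)) (traj f u x t)

/-- Penalized value function `V_p(x)`. -/
def Vpen {X U : Type*} (γ : ℝ) (f : X → U → X) (XF : Set X) (r : X → U → ℝ) (p : ℝ)
    (x : X) : ℝ :=
  ⨆ u : X → U, (ret γ f r x u - p * risk γ f XF x u)

/-- Constrained value function `V(x)`: supremum of the return over safe controllers. -/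
def Vcon {X U : Type*} (γ : ℝ) (f : X → U → X) (XF : Set X) (r : X → U → ℝ) (x : X) : ℝ :=
  ⨆ u : {u : X → U // SafeFor f XF u x}, ret γ f r x (u : X → U)

/-- `R_{Q_V}`: infimum of the reward over state-control pairs transitioning into the kernel. -/
def RQV {X U : Type*} (f : X → U → X) (XF : Set X) (r : X → U → ℝ) : ℝ :=
  sInf {y : ℝ | ∃ q : X × U, f q.1 q.2 ∈ viab f XF ∧ y = r q.1 q.2}

/-- `R_{Q_U}`: supremum of the reward over state-control pairs transitioning out of the kernel. -/
def RQU {X U : Type*} (f : X → U → X) (XF : Set X) (r : X → U → ℝ) : ℝ :=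
  sSup {y : ℝ | ∃ q : X × U, f q.1 q.2 ∉ viab f XF ∧ y = r q.1 q.2}

/-- `R_{X_U}`: supremum of the reward over the unviability kernel. -/
def RXU {X U : Type*} (f : X → U → X) (XF : Set X) (r : X → U → ℝ) : ℝ :=
  sSup {y : ℝ | ∃ x, x ∉ viab f XF ∧ ∃ a : U, y = r x a}

/-- `inf_{X_V} V`: infimum of the constrained value function over the viability kernel. -/
def infV {X U : Type*} (γ : ℝ) (f : X → U → X) (XF : Set X) (r : X → U → ℝ) : ℝ :=
  sInf {y : ℝ | ∃ x ∈ viab f XF, y = Vcon γ f XF r x}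

/-- `sup_{X_U} V_p`: supremum of the penalized value function over the unviability kernel. -/
def supVp {X U : Type*} (γ : ℝ) (f : X → U → X) (XF : Set X) (r : X → U → ℝ) (p : ℝ) : ℝ :=
  sSup {y : ℝ | ∃ x, x ∉ viab f XF ∧ y = Vpen γ f XF r p x}

lemma traj_absorb {X U : Type*} (f : X → U → X) (XF : Set X)
    (habs : ∀ x ∈ XF, ∀ a : U, f x a ∈ XF) (u : X → U) (x : X) {s t : ℕ}
    (hst : s ≤ t) (hs : traj f u x s ∈ XF) : traj f u x t ∈ XF := by
  induction t with
  | zero => rw [Nat.le_zero.mp hst] at hs; exact hs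
  | succ n ih =>
    rcases Nat.lt_or_ge s (n + 1) with h | h
    · exact habs _ (ih (Nat.lt_succ_iff.mp h)) _
    · have : s = n + 1 := le_antisymm hst h
      rw [this] at hs; exact hs

lemma traj_not_viab {X U : Type*} (f : X → U → X) (XF : Set X)
    {x : X} (hx : x ∉ viab f XF) (u : X → U) (t : ℕ)
    (hpre : ∀ s ≤ t, traj f u x s ∉ XF) : traj f u x t ∉ viab f XF := by
  classical
  intro hvi
  obtain ⟨u', hu'⟩ := hvi
  set y := traj f u x t with hy
  set S : Set X := Set.range (traj f u' y) with hS
  set w : X → U := fun z => if z ∈ S then u' z else u z with hw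
  apply hx
  refine ⟨w, ?_⟩
  have hSsafe : ∀ z ∈ S, z ∉ XF := by rintro z ⟨s, rfl⟩; exact hu' s
  have hSinv : ∀ z ∈ S, f z (w z) ∈ S := by
    rintro z ⟨s, rfl⟩
    have hz : w (traj f u' y s) = u' (traj f u' y s) := if_pos ⟨s, rfl⟩
    rw [hz]
    exact ⟨s + 1, rfl⟩
  have claim2 : ∀ s t', s ≤ t' → traj f w x s ∈ S → traj f w x t' ∈ S := by
    intro s t' hst hs
    induction t' with
    | zero => rwa [Nat.le_zero.mp hst] at hs
    | succ n ih =>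
      rcases Nat.lt_or_ge s (n + 1) with h | h
      · exact hSinv _ (ih (Nat.lt_succ_iff.mp h))
      · have : s = n + 1 := le_antisymm hst h
        rw [this] at hs; exact hs
  have claim3 : ∀ s, traj f w x s ∈ S ∨ traj f w x s = traj f u x s := by
    intro s
    induction s with
    | zero => right; rfl
    | succ n ih =>
      rcases ih with h | h
      · left; exact hSinv _ h
      · by_cases hmem : traj f w x n ∈ S
        · left; exact hSinv _ hmem
        · right
          show f (traj f w x n) (w (traj f w x n)) = f (traj f u x n) (u (traj f u x n))
          rw [h] at hmem ⊢
          rw [hw]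
          simp [hmem]
  have hyS : y ∈ S := ⟨0, rfl⟩
  have htS : traj f w x t ∈ S := by
    rcases claim3 t with h | h
    · exact h
    · rw [h]; exact hyS
  intro s
  rcases Nat.lt_or_ge s t with h | h
  · rcases claim3 s with hmem | heq
    · exact hSsafe _ hmem
    · rw [heq]; exact hpre s h.le
  · exact hSsafe _ (claim2 t s h htS)

/-- Lemma 3(ii), discrete time: upper bound on the penalized value function
on the unviability kernel. -/
theorem penalized_upper_bound_on_unviable {X U : Type*} [Nonempty U]
    (f : X → U → X) (XF : Set X) (γ : ℝ) (hγ0 : 0 < γ) (hγ1 : γ < 1)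
    (r : X → U → ℝ) (hr : ∃ C : ℝ, ∀ x a, |r x a| ≤ C)
    (habs : ∀ x ∈ XF, ∀ a : U, f x a ∈ XF) (hFne : XF.Nonempty)
    (hr0 : ∀ x ∈ XF, ∀ a : U, r x a = 0)
    (Tf : ℕ) (hTf : ∀ x, x ∉ viab f XF → ∀ u : X → U, ∃ t ≤ Tf, traj f u x t ∈ XF)
    (p : ℝ) (hp : 0 ≤ p) (x : X) (hx : x ∉ viab f XF) :
    Vpen γ f XF r p x ≤ RXU f XF r * (1 - γ ^ (Tf + 1)) / (1 - γ) - p * γ ^ Tf := by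
  classical
  obtain ⟨C, hC⟩ := hr
  have hγnn : (0 : ℝ) ≤ γ := hγ0.le
  have hγle1 : γ ≤ 1 := hγ1.le
  have h1γ : (0 : ℝ) < 1 - γ := by linarith
  obtain ⟨xf, hxf⟩ := hFne
  have hXne : Nonempty X := ⟨xf⟩
  have hXFunviab : ∀ z ∈ XF, z ∉ viab f XF := by
    rintro z hz ⟨u, hu⟩; exact hu 0 hz
  have hbdd : BddAbove {y : ℝ | ∃ x, x ∉ viab f XF ∧ ∃ a : U, y = r x a} := by
    refine ⟨C, ?_⟩
    rintro y ⟨x', _, a, rfl⟩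
    exact (abs_le.mp (hC x' a)).2
  have hRXU_mem : ∀ x', x' ∉ viab f XF → ∀ a : U, r x' a ≤ RXU f XF r :=
    fun x' hx' a => le_csSup hbdd ⟨x', hx', a, rfl⟩
  obtain ⟨a0⟩ := (inferInstance : Nonempty U)
  have hRXU0 : 0 ≤ RXU f XF r := by
    have h := hRXU_mem xf (hXFunviab xf hxf) a0
    rwa [hr0 xf hxf a0] at h
  apply ciSup_le
  intro u
  obtain ⟨tF, htFle, htF⟩ := hTf x hx u
  have hex : ∃ t, traj f u x t ∈ XF := ⟨tF, htF⟩
  set t0 := Nat.find hex with ht0def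
  have ht0F : traj f u x t0 ∈ XF := Nat.find_spec hex
  have ht0min : ∀ s < t0, traj f u x s ∉ XF := fun s hs => Nat.find_min hex hs
  have ht0Tf : t0 ≤ Tf := (Nat.find_min' hex htF).trans htFle
  -- Summability facts
  have hgeo : Summable (fun t : ℕ => γ ^ t) := summable_geometric_of_lt_one hγnn hγ1
  have hsum_ret : Summable (fun t : ℕ => γ ^ t * r (traj f u x t) (u (traj f u x t))) := by
    apply Summable.of_norm_bounded (g := fun t => C * γ ^ t) (hgeo.mul_left C)
    intro t
    rw [norm_mul, norm_pow, Real.norm_eq_abs, Real.norm_eq_abs, abs_of_nonneg hγnn, mul_comm]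
    exact mul_le_mul_of_nonneg_right (hC _ _) (pow_nonneg hγnn t)
  have hrisk_nonneg : ∀ t : ℕ,
      0 ≤ γ ^ t * XF.indicator (fun _ => (1 : ℝ)) (traj f u x t) := by
    intro t
    apply mul_nonneg (pow_nonneg hγnn t)
    exact Set.indicator_nonneg (fun _ _ => zero_le_one) _
  have hsum_risk : Summable
      (fun t : ℕ => γ ^ t * XF.indicator (fun _ => (1 : ℝ)) (traj f u x t)) := by
    apply Summable.of_nonneg_of_le hrisk_nonneg _ hgeo
    intro t
    by_cases h : traj f u x t ∈ XF
    · simp [Set.indicator_of_mem h]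
    · simp [Set.indicator_of_notMem h, pow_nonneg hγnn t]
  -- bound on ret
  have hmaj_sum : Summable (fun t : ℕ => if t < t0 then γ ^ t * RXU f XF r else 0) := by
    apply summable_of_ne_finset_zero (s := Finset.range t0)
    intro t ht
    rw [Finset.mem_range] at ht
    simp [ht]
  have hret_le : ret γ f r x u ≤ RXU f XF r * ((1 - γ ^ t0) / (1 - γ)) := by
    have hterm : ∀ t : ℕ, γ ^ t * r (traj f u x t) (u (traj f u x t)) ≤
        (if t < t0 then γ ^ t * RXU f XF r else 0) := by
      intro t
      by_cases ht : t < t0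
      · rw [if_pos ht]
        apply mul_le_mul_of_nonneg_left _ (pow_nonneg hγnn t)
        apply hRXU_mem _ _ (u (traj f u x t))
        exact traj_not_viab f XF hx u t (fun s hs => ht0min s (lt_of_le_of_lt hs ht))
      · rw [if_neg ht]
        have hmem : traj f u x t ∈ XF := traj_absorb f XF habs u x (Nat.le_of_not_lt ht) ht0F
        rw [hr0 _ hmem]
        simp
    have h1 : ret γ f r x u ≤ ∑' t : ℕ, (if t < t0 then γ ^ t * RXU f XF r else 0) :=
      Summable.tsum_le_tsum hterm hsum_ret hmaj_sum
    have h2 : (∑' t : ℕ, (if t < t0 then γ ^ t * RXU f XF r else 0)) =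
        ∑ t ∈ Finset.range t0, γ ^ t * RXU f XF r := by
      rw [tsum_eq_sum (s := Finset.range t0)]
      · apply Finset.sum_congr rfl
        intro t ht
        rw [Finset.mem_range] at ht
        simp [ht]
      · intro t ht
        rw [Finset.mem_range] at ht
        simp [ht]
    have h3 : (∑ t ∈ Finset.range t0, γ ^ t * RXU f XF r) =
        RXU f XF r * ((1 - γ ^ t0) / (1 - γ)) := by
      rw [← Finset.sum_mul, geom_sum_eq (ne_of_lt hγ1)]
      have hne1 : (1 : ℝ) - γ ≠ 0 := ne_of_gt h1γ
      have hne2 : γ - 1 ≠ 0 := by linarith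
      field_simp
      ring
    rw [h2, h3] at h1
    exact h1
  have hret_le' : ret γ f r x u ≤ RXU f XF r * (1 - γ ^ (Tf + 1)) / (1 - γ) := by
    have hpow : γ ^ (Tf + 1) ≤ γ ^ t0 :=
      pow_le_pow_of_le_one hγnn hγle1 (by omega)
    have : RXU f XF r * ((1 - γ ^ t0) / (1 - γ)) ≤
        RXU f XF r * ((1 - γ ^ (Tf + 1)) / (1 - γ)) := by
      apply mul_le_mul_of_nonneg_left _ hRXU0
      gcongr
    calc ret γ f r x u ≤ RXU f XF r * ((1 - γ ^ t0) / (1 - γ)) := hret_le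
      _ ≤ RXU f XF r * ((1 - γ ^ (Tf + 1)) / (1 - γ)) := this
      _ = RXU f XF r * (1 - γ ^ (Tf + 1)) / (1 - γ) := by ring
  -- bound on risk
  have hrisk_ge : γ ^ Tf ≤ risk γ f XF x u := by
    have h1 : γ ^ t0 * XF.indicator (fun _ => (1 : ℝ)) (traj f u x t0) ≤ risk γ f XF x u :=
      Summable.le_tsum hsum_risk t0 (fun i _ => hrisk_nonneg i)
    rw [Set.indicator_of_mem ht0F, mul_one] at h1
    exact le_trans (pow_le_pow_of_le_one hγnn hγle1 ht0Tf) h1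
  have hpr : p * γ ^ Tf ≤ p * risk γ f XF x u := mul_le_mul_of_nonneg_left hrisk_ge hp
  linarith
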